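/- If a(τ) = τ + Σ_{n≥2} c_n τ^n is analytic at 0 with c₂ = 0, then with ρ(τ) = (3/(8π))·(a'(τ)² − 1)/a(τ)² and p(τ) = −(1/(8π))·(2a''(τ)a(τ) + a'(τ)² − 1)/a(τ)², both ρ and p extend continuously to τ = 0 and the limits satisfy ρ(0) = −p(0) = (3/(8π))·6c₃. -/

import Mathlib

open Filter Topology
open scoped ENNReal NNReal

set_option maxHeartbeats 1000000 in
/-- For an analytic scale factor `a(τ) = τ + Σ_{n≥2} c_n τ^n` with `c₂ = 0`,
both the energy density `ρ` and pressure `p` of the `k = −1` FLRW spacetime extend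
continuously to `τ = 0` with `ρ(0) = −p(0) = (3/(8π))·6c₃`. -/
theorem statement1 (a : ℝ → ℝ) (c : ℕ → ℝ) (r : ℝ) (hr : 0 < r)
    (hc0 : c 0 = 0) (hc1 : c 1 = 1) (hc2 : c 2 = 0)
    (hsum : ∀ τ : ℝ, |τ| < r → HasSum (fun n => c n * τ ^ n) (a τ))
    (hpos : ∀ τ : ℝ, 0 < τ → τ < r → 0 < a τ)
    (ρ p : ℝ → ℝ)
    (hρ : ∀ τ : ℝ, ρ τ = 3 / (8 * Real.pi) * ((deriv a τ) ^ 2 - 1) / (a τ) ^ 2)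
    (hp : ∀ τ : ℝ, p τ =
      -(1 / (8 * Real.pi)) * (2 * deriv (deriv a) τ * a τ + (deriv a τ) ^ 2 - 1) / (a τ) ^ 2) :
    Tendsto ρ (𝓝[>] (0 : ℝ)) (𝓝 (3 / (8 * Real.pi) * (6 * c 3))) ∧
      Tendsto p (𝓝[>] (0 : ℝ)) (𝓝 (-(3 / (8 * Real.pi) * (6 * c 3)))) := by
  set s : ℝ := r / 2 with hs_def
  have hs0 : 0 < s := by positivity
  have hsr : s < r := by simp only [hs_def]; linarith
  set P : FormalMultilinearSeries ℝ ℝ ℝ :=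
    FormalMultilinearSeries.ofScalars ℝ (fun n => c (n + 3)) with hP
  -- radius bound
  have hsum_s := hsum s (by rw [abs_of_pos hs0]; exact hsr)
  obtain ⟨C, hC⟩ : ∃ C : ℝ, ∀ n, |c n * s ^ n| ≤ C := by
    have h0 : Tendsto (fun n => |c n * s ^ n|) atTop (𝓝 |0|) :=
      (hsum_s.summable.tendsto_atTop_zero).abs
    obtain ⟨C, hC⟩ := h0.bddAbove_range
    exact ⟨C, fun n => hC ⟨n, rfl⟩⟩
  have hrad : (ENNReal.ofReal s) ≤ P.radius := by
    have : (ENNReal.ofReal s) = (s.toNNReal : ENNReal) := rfl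
    rw [this]
    apply P.le_radius_of_bound (C / s ^ 3)
    intro n
    have hnorm : ‖P n‖ = |c (n + 3)| := by
      rw [hP, FormalMultilinearSeries.ofScalars_norm, Real.norm_eq_abs]
    rw [hnorm, Real.coe_toNNReal _ hs0.le]
    rw [le_div_iff₀ (by positivity)]
    calc |c (n + 3)| * s ^ n * s ^ 3 = |c (n + 3) * s ^ (n + 3)| := by
          rw [abs_mul, abs_pow, abs_of_pos hs0]; ring
      _ ≤ C := hC (n + 3)
  have hradpos : (0 : ℝ≥0∞) < P.radius :=
    lt_of_lt_of_le (ENNReal.ofReal_pos.mpr hs0) hrad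
  set g : ℝ → ℝ := P.sum with hg_def
  have hgball : HasFPowerSeriesOnBall g P 0 (ENNReal.ofReal s) :=
    (P.hasFPowerSeriesOnBall hradpos).mono (ENNReal.ofReal_pos.mpr hs0) hrad
  have ganal : AnalyticOnNhd ℝ g (Metric.ball (0 : ℝ) s) := by
    have := hgball.analyticOnNhd
    rwa [Metric.emetric_ball] at this
  have hmemball : ∀ {τ : ℝ}, |τ| < s → τ ∈ Metric.ball (0 : ℝ) s := by
    intro τ h
    rw [Metric.mem_ball, Real.dist_0_eq_abs]; exact h
  have hgsum : ∀ τ : ℝ, |τ| < s → HasSum (fun n => c (n + 3) * τ ^ n) (g τ) := by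
    intro τ hτ
    have hm : τ ∈ Metric.eball (0 : ℝ) (ENNReal.ofReal s) := by
      rw [Metric.emetric_ball]; exact hmemball hτ
    have h := hgball.hasSum hm
    rw [zero_add] at h
    have hfn : (fun n => P n fun _ => τ) = fun n => c (n + 3) * τ ^ n := by
      funext n
      rw [hP, FormalMultilinearSeries.ofScalars_apply_eq, smul_eq_mul]
    rwa [hfn] at h
  have key1 : ∀ τ : ℝ, |τ| < s → a τ = τ + τ ^ 3 * g τ := by
    intro τ hτ
    have h1 := (hasSum_nat_add_iff' (f := fun n => c n * τ ^ n) 3).2 (hsum τ (hτ.trans hsr))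
    have hfun : (fun n => c (n + 3) * τ ^ (n + 3)) =
        fun n => τ ^ 3 * (c (n + 3) * τ ^ n) := funext fun n => by ring
    have h2 : HasSum (fun n => c (n + 3) * τ ^ (n + 3)) (τ ^ 3 * g τ) := by
      rw [hfun]; exact (hgsum τ hτ).mul_left _
    have h3 := h2.unique h1
    have hfin : (∑ i ∈ Finset.range 3, c i * τ ^ i) = τ := by
      simp [Finset.sum_range_succ, hc0, hc1, hc2]
    rw [hfin] at h3
    linarith
  have hg0 : g 0 = c 3 := by
    have h := hgsum 0 (by simpa using hs0)
    have h' : HasSum (fun n => c (n + 3) * (0 : ℝ) ^ n) (c 3 * (0 : ℝ) ^ 0) :=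
      hasSum_single 0 (fun b hb => by simp [zero_pow hb])
    simpa using h.unique h'
  have g'anal : AnalyticOnNhd ℝ (deriv g) (Metric.ball (0 : ℝ) s) := ganal.deriv
  have g''anal : AnalyticOnNhd ℝ (deriv (deriv g)) (Metric.ball (0 : ℝ) s) := g'anal.deriv
  have gdiff : ∀ τ ∈ Metric.ball (0 : ℝ) s, HasDerivAt g (deriv g τ) τ :=
    fun τ hτ => (ganal τ hτ).differentiableAt.hasDerivAt
  have g'diff : ∀ τ ∈ Metric.ball (0 : ℝ) s, HasDerivAt (deriv g) (deriv (deriv g) τ) τ :=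
    fun τ hτ => (g'anal τ hτ).differentiableAt.hasDerivAt
  have hopen : IsOpen (Metric.ball (0 : ℝ) s) := Metric.isOpen_ball
  have habs : ∀ {τ : ℝ}, τ ∈ Metric.ball (0 : ℝ) s → |τ| < s := by
    intro τ h
    rwa [Metric.mem_ball, Real.dist_0_eq_abs] at h
  have haev : ∀ τ ∈ Metric.ball (0 : ℝ) s, a =ᶠ[𝓝 τ] fun x => x + x ^ 3 * g x := by
    intro τ hτ
    filter_upwards [hopen.mem_nhds hτ] with x hx
    exact key1 x (habs hx)
  have hda : ∀ τ ∈ Metric.ball (0 : ℝ) s,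
      deriv a τ = 1 + 3 * τ ^ 2 * g τ + τ ^ 3 * deriv g τ := by
    intro τ hτ
    have H : HasDerivAt (fun x => x + x ^ 3 * g x)
        (1 + 3 * τ ^ 2 * g τ + τ ^ 3 * deriv g τ) τ := by
      have h1 := (hasDerivAt_pow 3 τ).mul (gdiff τ hτ)
      have h2 := (hasDerivAt_id τ).add h1
      refine HasDerivAt.congr_deriv h2 ?_
      push_cast
      ring
    rw [(haev τ hτ).deriv_eq]
    exact H.deriv
  have hdaev : ∀ τ ∈ Metric.ball (0 : ℝ) s,
      deriv a =ᶠ[𝓝 τ] fun x => 1 + 3 * x ^ 2 * g x + x ^ 3 * deriv g x := by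
    intro τ hτ
    filter_upwards [hopen.mem_nhds hτ] with x hx
    exact hda x hx
  have hdda : ∀ τ ∈ Metric.ball (0 : ℝ) s,
      deriv (deriv a) τ = 6 * τ * g τ + 6 * τ ^ 2 * deriv g τ + τ ^ 3 * deriv (deriv g) τ := by
    intro τ hτ
    have H : HasDerivAt (fun x => 1 + 3 * x ^ 2 * g x + x ^ 3 * deriv g x)
        (6 * τ * g τ + 6 * τ ^ 2 * deriv g τ + τ ^ 3 * deriv (deriv g) τ) τ := by
      have h1 := ((hasDerivAt_pow 2 τ).const_mul (3 : ℝ)).mul (gdiff τ hτ)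
      have h2 := (hasDerivAt_pow 3 τ).mul (g'diff τ hτ)
      have h3 := ((hasDerivAt_const τ (1 : ℝ)).add h1).add h2
      refine HasDerivAt.congr_deriv h3 ?_
      push_cast
      ring
    rw [(hdaev τ hτ).deriv_eq]
    exact H.deriv
  -- continuity facts at 0
  have h0mem : (0 : ℝ) ∈ Metric.ball (0 : ℝ) s := by simpa using hs0
  have hgc : ContinuousAt g 0 := (ganal 0 h0mem).continuousAt
  have hg'c : ContinuousAt (deriv g) 0 := (g'anal 0 h0mem).continuousAt
  have hg''c : ContinuousAt (deriv (deriv g)) 0 := (g''anal 0 h0mem).continuousAt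
  have hIoo : Set.Ioo (0 : ℝ) s ∈ 𝓝[>] (0 : ℝ) :=
    Ioo_mem_nhdsGT_of_mem (Set.left_mem_Ico.mpr hs0)
  -- the ρ limit
  set F : ℝ → ℝ := fun τ => 3 / (8 * Real.pi) *
      ((3 * g τ + τ * deriv g τ) * (1 + 3 * τ ^ 2 * g τ + τ ^ 3 * deriv g τ + 1)) /
      (1 + τ ^ 2 * g τ) ^ 2 with hF
  have hFc : ContinuousAt F 0 := by
    apply ContinuousAt.div
    · exact continuousAt_const.mul
        (((continuousAt_const.mul hgc).add (continuousAt_id.mul hg'c)).mul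
          (((continuousAt_const.add (((continuousAt_const.mul (continuousAt_pow (0:ℝ) 2)).mul hgc))).add
            ((continuousAt_pow (0:ℝ) 3).mul hg'c)).add continuousAt_const))
    · exact (continuousAt_const.add ((continuousAt_pow (0:ℝ) 2).mul hgc)).pow 2
    · norm_num
  have hF0 : F 0 = 3 / (8 * Real.pi) * (6 * c 3) := by
    simp [hF, hg0]
    ring_nf
    try exact Or.inl trivial
  have hρF : ρ =ᶠ[𝓝[>] (0 : ℝ)] F := by
    filter_upwards [hIoo] with τ hτ
    have hτs : |τ| < s := by rw [abs_of_pos hτ.1]; exact hτ.2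
    have hmb : τ ∈ Metric.ball (0 : ℝ) s := hmemball hτs
    have hτ0 : τ ≠ 0 := ne_of_gt hτ.1
    rw [hρ τ, hda τ hmb, key1 τ hτs]
    have e1 : τ + τ ^ 3 * g τ = τ * (1 + τ ^ 2 * g τ) := by ring
    have e2 : 3 / (8 * Real.pi) * ((1 + 3 * τ ^ 2 * g τ + τ ^ 3 * deriv g τ) ^ 2 - 1) =
        τ ^ 2 * (3 / (8 * Real.pi) *
          ((3 * g τ + τ * deriv g τ) * (1 + 3 * τ ^ 2 * g τ + τ ^ 3 * deriv g τ + 1))) := by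
      ring
    rw [e1, mul_pow, e2, mul_div_mul_left _ _ (pow_ne_zero 2 hτ0)]
  have hρlim : Tendsto ρ (𝓝[>] (0 : ℝ)) (𝓝 (3 / (8 * Real.pi) * (6 * c 3))) := by
    rw [← hF0]
    exact (hFc.tendsto.mono_left nhdsWithin_le_nhds).congr' hρF.symm
  -- the p limit
  set G : ℝ → ℝ := fun τ => -(1 / (8 * Real.pi)) *
      (2 * (6 * g τ + 6 * τ * deriv g τ + τ ^ 2 * deriv (deriv g) τ) * (1 + τ ^ 2 * g τ) +
        (3 * g τ + τ * deriv g τ) * (1 + 3 * τ ^ 2 * g τ + τ ^ 3 * deriv g τ + 1)) /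
      (1 + τ ^ 2 * g τ) ^ 2 with hG
  have hGc : ContinuousAt G 0 := by
    apply ContinuousAt.div
    · refine continuousAt_const.mul (ContinuousAt.add ?_ ?_)
      · exact ((continuousAt_const.mul
          (((continuousAt_const.mul hgc).add
            ((continuousAt_const.mul continuousAt_id).mul hg'c)).add
            ((continuousAt_pow (0:ℝ) 2).mul hg''c))).mul
          (continuousAt_const.add ((continuousAt_pow (0:ℝ) 2).mul hgc)))
      · exact ((continuousAt_const.mul hgc).add (continuousAt_id.mul hg'c)).mul
          (((continuousAt_const.add ((continuousAt_const.mul (continuousAt_pow (0:ℝ) 2)).mul hgc)).add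
            ((continuousAt_pow (0:ℝ) 3).mul hg'c)).add continuousAt_const)
    · exact (continuousAt_const.add ((continuousAt_pow (0:ℝ) 2).mul hgc)).pow 2
    · norm_num
  have hG0 : G 0 = -(3 / (8 * Real.pi) * (6 * c 3)) := by
    simp [hG, hg0]
    ring_nf
    try exact Or.inl trivial
  have hpG : p =ᶠ[𝓝[>] (0 : ℝ)] G := by
    filter_upwards [hIoo] with τ hτ
    have hτs : |τ| < s := by rw [abs_of_pos hτ.1]; exact hτ.2
    have hmb : τ ∈ Metric.ball (0 : ℝ) s := hmemball hτs
    have hτ0 : τ ≠ 0 := ne_of_gt hτ.1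
    rw [hp τ, hda τ hmb, hdda τ hmb, key1 τ hτs]
    have e1 : τ + τ ^ 3 * g τ = τ * (1 + τ ^ 2 * g τ) := by ring
    have e2 : -(1 / (8 * Real.pi)) *
        (2 * (6 * τ * g τ + 6 * τ ^ 2 * deriv g τ + τ ^ 3 * deriv (deriv g) τ) *
            (τ * (1 + τ ^ 2 * g τ)) +
          (1 + 3 * τ ^ 2 * g τ + τ ^ 3 * deriv g τ) ^ 2 - 1) =
        τ ^ 2 * (-(1 / (8 * Real.pi)) *
          (2 * (6 * g τ + 6 * τ * deriv g τ + τ ^ 2 * deriv (deriv g) τ) * (1 + τ ^ 2 * g τ) +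
            (3 * g τ + τ * deriv g τ) * (1 + 3 * τ ^ 2 * g τ + τ ^ 3 * deriv g τ + 1))) := by
      ring
    rw [e1, mul_pow, e2, mul_div_mul_left _ _ (pow_ne_zero 2 hτ0)]
  have hplim : Tendsto p (𝓝[>] (0 : ℝ)) (𝓝 (-(3 / (8 * Real.pi) * (6 * c 3)))) := by
    rw [← hG0]
    exact (hGc.tendsto.mono_left nhdsWithin_le_nhds).congr' hpG.symm
  exact ⟨hρlim, hplim⟩
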